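/- For any vectors v_1, ..., v_m in a Euclidean space E with \sum_i \|v_i\|^2 \le 1, and any vectors u_1, ..., u_m with \sum_i u_i = 0 and \sum_i \|u_i\|^2 \le 1, one has \sum_i \langle u_i, v_i \rangle \le \sqrt{\sum_i \|v_i\|^2 - (1/m)\|\sum_i v_i\|^2}. -/
import Mathlib


open RealInnerProductSpace Finset

theorem inner_sum_le_sqrt (E : Type*) [NormedAddCommGroup E] [InnerProductSpace ℝ E]
    (m : ℕ) (hm : 0 < m) (u v : Fin m → E)
    (hu1 : ∑ i, ‖u i‖ ^ 2 ≤ 1) (hv1 : ∑ i, ‖v i‖ ^ 2 ≤ 1)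
    (hu0 : ∑ i, u i = 0) :
    ∑ i, ⟪u i, v i⟫ ≤ Real.sqrt (∑ i, ‖v i‖ ^ 2 - (1 / (m : ℝ)) * ‖∑ i, v i‖ ^ 2) := by
  have hmR : (0:ℝ) < m := Nat.cast_pos.mpr hm
  set s : E := ∑ i, v i with hs
  set c : E := ((m:ℝ)⁻¹) • s with hc
  set w : Fin m → E := fun i => v i - c with hw
  -- the key norm identity
  have hnorm : ∑ i, ‖w i‖ ^ 2 = ∑ i, ‖v i‖ ^ 2 - (1 / (m : ℝ)) * ‖s‖ ^ 2 := by
    have expand : ∀ i, ‖w i‖ ^ 2 = ‖v i‖ ^ 2 - 2 * ⟪v i, c⟫ + ‖c‖ ^ 2 := by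
      intro i
      have := @norm_sub_sq_real E _ _ (v i) c
      simpa [hw] using this
    rw [Finset.sum_congr rfl fun i _ => expand i]
    rw [Finset.sum_add_distrib, Finset.sum_sub_distrib]
    have h1 : ∑ i, 2 * ⟪v i, c⟫ = 2 * ⟪s, c⟫ := by
      rw [← Finset.mul_sum, ← sum_inner]
    have h2 : ⟪s, c⟫ = (m:ℝ)⁻¹ * ‖s‖ ^ 2 := by
      rw [hc, real_inner_smul_right, real_inner_self_eq_norm_sq]
    have h3 : ‖c‖ ^ 2 = (m:ℝ)⁻¹ * (m:ℝ)⁻¹ * ‖s‖ ^ 2 := by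
      rw [hc, norm_smul, Real.norm_eq_abs, abs_of_nonneg (inv_nonneg.mpr hmR.le)]
      ring
    rw [h1, h2]
    simp only [h3, Finset.sum_const, Finset.card_univ, Fintype.card_fin, nsmul_eq_mul]
    field_simp
    ring
  -- inner product identity
  have hinner : ∑ i, ⟪u i, v i⟫ = ∑ i, ⟪u i, w i⟫ := by
    have : ∑ i, ⟪u i, w i⟫ = ∑ i, ⟪u i, v i⟫ - ⟪∑ i, u i, c⟫ := by
      rw [sum_inner, ← Finset.sum_sub_distrib]
      exact Finset.sum_congr rfl fun i _ => by rw [hw]; rw [inner_sub_right]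
    rw [this, hu0]
    simp
  rw [hinner, ← hnorm]
  have hwnn : (0:ℝ) ≤ ∑ i, ‖w i‖ ^ 2 :=
    Finset.sum_nonneg fun i _ => sq_nonneg _
  have step1 : ∑ i, ⟪u i, w i⟫ ≤ ∑ i, ‖u i‖ * ‖w i‖ :=
    Finset.sum_le_sum fun i _ => real_inner_le_norm _ _
  have step2 : (∑ i, ‖u i‖ * ‖w i‖) ^ 2 ≤ (∑ i, ‖u i‖ ^ 2) * (∑ i, ‖w i‖ ^ 2) :=
    Finset.sum_mul_sq_le_sq_mul_sq _ _ _
  have step3 : (∑ i, ‖u i‖ * ‖w i‖) ^ 2 ≤ ∑ i, ‖w i‖ ^ 2 := by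
    calc (∑ i, ‖u i‖ * ‖w i‖) ^ 2 ≤ (∑ i, ‖u i‖ ^ 2) * (∑ i, ‖w i‖ ^ 2) := step2
    _ ≤ 1 * (∑ i, ‖w i‖ ^ 2) := mul_le_mul_of_nonneg_right hu1 hwnn
    _ = ∑ i, ‖w i‖ ^ 2 := one_mul _
  have step4 : ∑ i, ‖u i‖ * ‖w i‖ ≤ Real.sqrt (∑ i, ‖w i‖ ^ 2) := by
    rcases le_or_gt (∑ i, ‖u i‖ * ‖w i‖) 0 with h | h
    · exact h.trans (Real.sqrt_nonneg _)
    · rw [← Real.sqrt_sq h.le]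
      exact Real.sqrt_le_sqrt step3
  exact step1.trans step4
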